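/- Let r_i, r_j > 0 and h_i, h_j ∈ ℝ with (r_i, h_i) ≠ (r_j, h_j). Set z = h_i − h_j, ρ² = r_i² + r_j² + z², and δ = 2 r_i r_j / ρ², so that 0 < δ < 1. Define the circles Xⁱ(u) = (r_i cos 2πu, r_i sin 2πu, h_i) and Xʲ(v) = (r_j cos 2πv, r_j sin 2πv, h_j) and the unit tangent Tʲ(v) = (−sin 2πv, cos 2πv, 0). Then for every u ∈ ℝ the Biot–Savart integral over the circle Γʲ satisfies 2π r_j ∫₀¹ ( (Xⁱ(u) − Xʲ(v)) × Tʲ(v) ) / ‖Xⁱ(u) − Xʲ(v)‖³ dv = (2π r_j / ρ³) ( −z I_s(δ) cos 2πu, −z I_s(δ) sin 2πu, r_i I_s(δ) − r_j I_0(δ) ), where I_s(δ) = ∫₀¹ sin(2πw)(1 − δ sin(2πw))^{−3/2} dw and I_0(δ) = ∫₀¹ (1 − δ sin(2πw))^{−3/2} dw. -/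

import Mathlib

noncomputable section

open Real intervalIntegral

/-- The cross product on `EuclideanSpace ℝ (Fin 3)`. -/
def cross3 (a b : EuclideanSpace ℝ (Fin 3)) : EuclideanSpace ℝ (Fin 3) :=
  (WithLp.equiv 2 (Fin 3 → ℝ)).symm
    ![a 1 * b 2 - a 2 * b 1, a 2 * b 0 - a 0 * b 2, a 0 * b 1 - a 1 * b 0]

/-- The parametric integral `I_s(δ)`. -/
def Is (δ : ℝ) : ℝ :=
  ∫ w in (0:ℝ)..1, Real.sin (2 * π * w) / (1 - δ * Real.sin (2 * π * w)) ^ ((3:ℝ)/2)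

/-- The parametric integral `I_0(δ)`. -/
def I0 (δ : ℝ) : ℝ :=
  ∫ w in (0:ℝ)..1, 1 / (1 - δ * Real.sin (2 * π * w)) ^ ((3:ℝ)/2)

namespace BSaux

open MeasureTheory

lemma cosden_pos {δ : ℝ} (h0 : 0 ≤ δ) (h1 : δ < 1) (x : ℝ) : 0 < 1 - δ * Real.cos x := by
  nlinarith [Real.neg_one_le_cos x, Real.cos_le_one x]

lemma per_sin (g : ℝ → ℝ) : Function.Periodic (fun w => g (Real.sin (2*π*w))) 1 := by
  intro w
  have : 2*π*(w+1) = 2*π*w + 2*π := by ring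
  simp [this, Real.sin_add_two_pi]

lemma gen_quarter (g : ℝ → ℝ) :
    (∫ t in (0:ℝ)..1, g (Real.cos (2*π*t))) = ∫ w in (0:ℝ)..1, g (Real.sin (2*π*w)) := by
  set f : ℝ → ℝ := fun w => g (Real.sin (2*π*w)) with hfdef
  have hpt : ∀ t : ℝ, g (Real.cos (2*π*t)) = f ((1:ℝ)/4 - t) := by
    intro t
    have h : 2*π*((1:ℝ)/4 - t) = π/2 - 2*π*t := by ring
    simp only [hfdef, h, Real.sin_pi_div_two_sub]
  have h1 : (∫ t in (0:ℝ)..1, g (Real.cos (2*π*t))) = ∫ t in (0:ℝ)..1, f ((1:ℝ)/4 - t) := by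
    simp_rw [hpt]
  have h2 := intervalIntegral.integral_comp_sub_left (a := (0:ℝ)) (b := 1) f ((1:ℝ)/4)
  have hper : Function.Periodic f 1 := per_sin g
  have h3 := hper.intervalIntegral_add_eq ((1:ℝ)/4 - 1) 0
  rw [h1, h2]
  norm_num at h3 ⊢
  convert h3 using 2 <;> norm_num

lemma shift_per {f : ℝ → ℝ} (hper : Function.Periodic f 1) (u : ℝ) :
    (∫ v in (0:ℝ)..1, f v) = ∫ t in (0:ℝ)..1, f (t + u) := by
  have h1 := intervalIntegral.integral_comp_add_right (a := (0:ℝ)) (b := 1) f u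
  have h2 := hper.intervalIntegral_add_eq u 0
  rw [h1, show (0:ℝ)+u = u by ring, show (1:ℝ)+u = u+1 by ring, h2]; norm_num

lemma Js_eq (δ : ℝ) :
    (∫ t in (0:ℝ)..1, Real.sin (2*π*t) / (1 - δ * Real.cos (2*π*t)) ^ ((3:ℝ)/2)) = 0 := by
  set f : ℝ → ℝ := fun t => Real.sin (2*π*t) / (1 - δ * Real.cos (2*π*t)) ^ ((3:ℝ)/2) with hf
  have hodd : ∀ t : ℝ, f (1 - t) = - f t := by
    intro t
    have h : 2*π*((1:ℝ) - t) = 2*π - 2*π*t := by ring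
    simp only [hf, h, Real.sin_two_pi_sub, Real.cos_two_pi_sub, neg_div]
  have h2 := intervalIntegral.integral_comp_sub_left (a := (0:ℝ)) (b := 1) f 1
  have h3 : (∫ x in (0:ℝ)..1, f (1-x)) = ∫ t in (0:ℝ)..1, f t := by
    rw [h2]; norm_num
  have h4 : (∫ x in (0:ℝ)..1, f (1-x)) = - ∫ t in (0:ℝ)..1, f t := by
    simp_rw [hodd]
    rw [intervalIntegral.integral_neg]
  have := h3.symm.trans h4
  linarith

variable {δ : ℝ}

lemma Jc_eq : (∫ t in (0:ℝ)..1, Real.cos (2*π*t) / (1 - δ * Real.cos (2*π*t)) ^ ((3:ℝ)/2)) = Is δ :=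
  gen_quarter (fun s => s / (1 - δ * s) ^ ((3:ℝ)/2))

lemma J0_eq : (∫ t in (0:ℝ)..1, 1 / (1 - δ * Real.cos (2*π*t)) ^ ((3:ℝ)/2)) = I0 δ :=
  gen_quarter (fun s => 1 / (1 - δ * s) ^ ((3:ℝ)/2))

lemma contD (h0 : 0 ≤ δ) (h1 : δ < 1) :
    Continuous fun t : ℝ => (1 - δ * Real.cos (2*π*t)) ^ ((3:ℝ)/2) := by
  apply Continuous.rpow_const (by continuity)
  intro x; exact Or.inl (ne_of_gt (cosden_pos h0 h1 _))

lemma contA (h0 : 0 ≤ δ) (h1 : δ < 1) :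
    Continuous fun t : ℝ => Real.cos (2*π*t) / (1 - δ * Real.cos (2*π*t)) ^ ((3:ℝ)/2) := by
  apply Continuous.div (by continuity) (contD h0 h1)
  intro x
  exact ne_of_gt (Real.rpow_pos_of_pos (cosden_pos h0 h1 _) _)

lemma contB (h0 : 0 ≤ δ) (h1 : δ < 1) :
    Continuous fun t : ℝ => Real.sin (2*π*t) / (1 - δ * Real.cos (2*π*t)) ^ ((3:ℝ)/2) := by
  apply Continuous.div (by continuity) (contD h0 h1)
  intro x
  exact ne_of_gt (Real.rpow_pos_of_pos (cosden_pos h0 h1 _) _)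

lemma contC (h0 : 0 ≤ δ) (h1 : δ < 1) :
    Continuous fun t : ℝ => 1 / (1 - δ * Real.cos (2*π*t)) ^ ((3:ℝ)/2) := by
  apply Continuous.div (by continuity) (contD h0 h1)
  intro x
  exact ne_of_gt (Real.rpow_pos_of_pos (cosden_pos h0 h1 _) _)

lemma Kcos (h0 : 0 ≤ δ) (h1 : δ < 1) (u : ℝ) :
    (∫ v in (0:ℝ)..1, Real.cos (2*π*v) / (1 - δ * Real.cos (2*π*(v-u))) ^ ((3:ℝ)/2))
      = Real.cos (2*π*u) * Is δ := by
  set f : ℝ → ℝ := fun v => Real.cos (2*π*v) / (1 - δ * Real.cos (2*π*(v-u))) ^ ((3:ℝ)/2) with hf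
  have hper : Function.Periodic f 1 := by
    intro v
    simp only [hf, show 2*π*(v+1) = 2*π*v + 2*π by ring,
      show 2*π*(v+1-u) = 2*π*(v-u) + 2*π by ring, Real.cos_add_two_pi]
  have hpt : ∀ t : ℝ, f (t + u)
      = Real.cos (2*π*u) * (Real.cos (2*π*t) / (1 - δ * Real.cos (2*π*t)) ^ ((3:ℝ)/2))
      - Real.sin (2*π*u) * (Real.sin (2*π*t) / (1 - δ * Real.cos (2*π*t)) ^ ((3:ℝ)/2)) := by
    intro t
    simp only [hf, show 2*π*(t+u-u) = 2*π*t by ring,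
      show 2*π*(t+u) = 2*π*t + 2*π*u by ring, Real.cos_add]
    ring
  rw [shift_per hper u]
  simp_rw [hpt]
  rw [intervalIntegral.integral_sub (((contA h0 h1).intervalIntegrable _ _).const_mul _)
      (((contB h0 h1).intervalIntegrable _ _).const_mul _),
    intervalIntegral.integral_const_mul, intervalIntegral.integral_const_mul,
    Jc_eq, Js_eq]
  ring

lemma Ksin (h0 : 0 ≤ δ) (h1 : δ < 1) (u : ℝ) :
    (∫ v in (0:ℝ)..1, Real.sin (2*π*v) / (1 - δ * Real.cos (2*π*(v-u))) ^ ((3:ℝ)/2))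
      = Real.sin (2*π*u) * Is δ := by
  set f : ℝ → ℝ := fun v => Real.sin (2*π*v) / (1 - δ * Real.cos (2*π*(v-u))) ^ ((3:ℝ)/2) with hf
  have hper : Function.Periodic f 1 := by
    intro v
    simp only [hf, show 2*π*(v+1) = 2*π*v + 2*π by ring,
      show 2*π*(v+1-u) = 2*π*(v-u) + 2*π by ring, Real.cos_add_two_pi, Real.sin_add_two_pi]
  have hpt : ∀ t : ℝ, f (t + u)
      = Real.sin (2*π*u) * (Real.cos (2*π*t) / (1 - δ * Real.cos (2*π*t)) ^ ((3:ℝ)/2))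
      + Real.cos (2*π*u) * (Real.sin (2*π*t) / (1 - δ * Real.cos (2*π*t)) ^ ((3:ℝ)/2)) := by
    intro t
    simp only [hf, show 2*π*(t+u-u) = 2*π*t by ring,
      show 2*π*(t+u) = 2*π*t + 2*π*u by ring, Real.sin_add]
    ring
  rw [shift_per hper u]
  simp_rw [hpt]
  rw [intervalIntegral.integral_add (((contA h0 h1).intervalIntegrable _ _).const_mul _)
      (((contB h0 h1).intervalIntegrable _ _).const_mul _),
    intervalIntegral.integral_const_mul, intervalIntegral.integral_const_mul,
    Jc_eq, Js_eq]
  ring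

lemma Kthird (h0 : 0 ≤ δ) (h1 : δ < 1) (ri rj u : ℝ) :
    (∫ v in (0:ℝ)..1, (ri * Real.cos (2*π*(v-u)) - rj) / (1 - δ * Real.cos (2*π*(v-u))) ^ ((3:ℝ)/2))
      = ri * Is δ - rj * I0 δ := by
  set f : ℝ → ℝ := fun v => (ri * Real.cos (2*π*(v-u)) - rj) / (1 - δ * Real.cos (2*π*(v-u))) ^ ((3:ℝ)/2) with hf
  have hper : Function.Periodic f 1 := by
    intro v
    simp only [hf, show 2*π*(v+1-u) = 2*π*(v-u) + 2*π by ring, Real.cos_add_two_pi]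
  have hpt : ∀ t : ℝ, f (t + u)
      = ri * (Real.cos (2*π*t) / (1 - δ * Real.cos (2*π*t)) ^ ((3:ℝ)/2))
      - rj * (1 / (1 - δ * Real.cos (2*π*t)) ^ ((3:ℝ)/2)) := by
    intro t
    simp only [hf, show 2*π*(t+u-u) = 2*π*t by ring]
    ring
  rw [shift_per hper u]
  simp_rw [hpt]
  rw [intervalIntegral.integral_sub (((contA h0 h1).intervalIntegrable _ _).const_mul _)
      (((contC h0 h1).intervalIntegrable _ _).const_mul _),
    intervalIntegral.integral_const_mul, intervalIntegral.integral_const_mul,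
    Jc_eq, J0_eq]

lemma vec3_decomp (a b c : ℝ) :
    ((WithLp.equiv 2 (Fin 3 → ℝ)).symm ![a,b,c] : EuclideanSpace ℝ (Fin 3))
      = a • (EuclideanSpace.single 0 1 : EuclideanSpace ℝ (Fin 3))
        + b • EuclideanSpace.single 1 1 + c • EuclideanSpace.single 2 1 := by
  ext i
  fin_cases i <;>
    simp [WithLp.equiv_symm_apply, PiLp.toLp_apply, EuclideanSpace.single_apply, PiLp.add_apply, PiLp.smul_apply]

lemma II_smul_const {f : ℝ → ℝ} {a b : ℝ} (h : IntervalIntegrable f volume a b)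
    (c : EuclideanSpace ℝ (Fin 3)) :
    IntervalIntegrable (fun x => f x • c) volume a b :=
  ⟨h.1.smul_const c, h.2.smul_const c⟩

lemma integral_vec3 (f0 f1 f2 : ℝ → ℝ)
    (h0 : IntervalIntegrable f0 volume 0 1)
    (h1 : IntervalIntegrable f1 volume 0 1)
    (h2 : IntervalIntegrable f2 volume 0 1) :
    (∫ v in (0:ℝ)..1, ((WithLp.equiv 2 (Fin 3 → ℝ)).symm ![f0 v, f1 v, f2 v]
        : EuclideanSpace ℝ (Fin 3)))
      = (WithLp.equiv 2 (Fin 3 → ℝ)).symm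
          ![∫ v in (0:ℝ)..1, f0 v, ∫ v in (0:ℝ)..1, f1 v, ∫ v in (0:ℝ)..1, f2 v] := by
  simp_rw [vec3_decomp]
  rw [intervalIntegral.integral_add ((II_smul_const h0 _).add (II_smul_const h1 _))
      (II_smul_const h2 _),
    intervalIntegral.integral_add (II_smul_const h0 _) (II_smul_const h1 _),
    intervalIntegral.integral_smul_const, intervalIntegral.integral_smul_const,
    intervalIntegral.integral_smul_const]

end BSaux

open BSaux MeasureTheory

set_option maxHeartbeats 1000000 in
theorem biot_savart_coaxial_circles
    (ri rj hi hj z ρ δ : ℝ) (hri : 0 < ri) (hrj : 0 < rj)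
    (hne : (ri, hi) ≠ (rj, hj))
    (hz : z = hi - hj)
    (hρ : ρ = Real.sqrt (ri ^ 2 + rj ^ 2 + z ^ 2))
    (hδ : δ = 2 * ri * rj / ρ ^ 2)
    (Xi Xj Tj : ℝ → EuclideanSpace ℝ (Fin 3))
    (hXi : ∀ u : ℝ, Xi u = (WithLp.equiv 2 (Fin 3 → ℝ)).symm
        ![ri * Real.cos (2 * π * u), ri * Real.sin (2 * π * u), hi])
    (hXj : ∀ v : ℝ, Xj v = (WithLp.equiv 2 (Fin 3 → ℝ)).symm
        ![rj * Real.cos (2 * π * v), rj * Real.sin (2 * π * v), hj])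
    (hTj : ∀ v : ℝ, Tj v = (WithLp.equiv 2 (Fin 3 → ℝ)).symm
        ![-Real.sin (2 * π * v), Real.cos (2 * π * v), 0]) :
    0 < δ ∧ δ < 1 ∧
    ∀ u : ℝ,
      (2 * π * rj) • (∫ v in (0:ℝ)..1,
          (‖Xi u - Xj v‖ ^ 3)⁻¹ • cross3 (Xi u - Xj v) (Tj v))
        = (2 * π * rj / ρ ^ 3) • ((WithLp.equiv 2 (Fin 3 → ℝ)).symm
            ![-z * Is δ * Real.cos (2 * π * u),
              -z * Is δ * Real.sin (2 * π * u),
              ri * Is δ - rj * I0 δ] : EuclideanSpace ℝ (Fin 3)) := by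
  have hargpos : (0:ℝ) < ri ^ 2 + rj ^ 2 + z ^ 2 := by positivity
  have hρpos : 0 < ρ := by rw [hρ]; exact Real.sqrt_pos.2 hargpos
  have hρ2 : ρ ^ 2 = ri ^ 2 + rj ^ 2 + z ^ 2 := by
    rw [hρ, Real.sq_sqrt hargpos.le]
  have hδpos : 0 < δ := by
    rw [hδ]; positivity
  have hδρ : δ * ρ ^ 2 = 2 * ri * rj := by
    rw [hδ]; field_simp
  have hδlt : δ < 1 := by
    rw [hδ, div_lt_one (by positivity)]
    rw [hρ2]
    have hcases : ri ≠ rj ∨ hi ≠ hj := by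
      by_contra hcon
      push_neg at hcon
      exact hne (by rw [hcon.1, hcon.2])
    rcases hcases with h' | h'
    · have h2 : (0:ℝ) < (ri - rj) ^ 2 := by
        have h3 : ri - rj ≠ 0 := sub_ne_zero.2 h'
        positivity
      nlinarith [sq_nonneg z]
    · have hz0 : z ≠ 0 := by rw [hz]; exact sub_ne_zero.2 h'
      have h2 : (0:ℝ) < z ^ 2 := by positivity
      nlinarith [sq_nonneg (ri - rj)]
  refine ⟨hδpos, hδlt, ?_⟩
  intro u
  -- abbreviations
  set cu := Real.cos (2 * π * u) with hcu
  set su := Real.sin (2 * π * u) with hsu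
  -- the difference vector
  have hsub : ∀ v : ℝ, Xi u - Xj v = (WithLp.equiv 2 (Fin 3 → ℝ)).symm
      ![ri * Real.cos (2 * π * u) - rj * Real.cos (2 * π * v),
        ri * Real.sin (2 * π * u) - rj * Real.sin (2 * π * v), z] := by
    intro v
    rw [hXi, hXj, hz]
    ext i
    fin_cases i <;> simp [WithLp.equiv_symm_apply, PiLp.toLp_apply]
  -- norm computation
  have hnorm3 : ∀ v : ℝ, ‖Xi u - Xj v‖ ^ 3
      = ρ ^ 3 * (1 - δ * Real.cos (2*π*(v-u))) ^ ((3:ℝ)/2) := by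
    intro v
    have hXpos : 0 < 1 - δ * Real.cos (2*π*(v-u)) := cosden_pos hδpos.le hδlt _
    have hA : ‖Xi u - Xj v‖ = Real.sqrt (ρ ^ 2 * (1 - δ * Real.cos (2*π*(v-u)))) := by
      rw [hsub v, EuclideanSpace.norm_eq]
      congr 1
      simp only [WithLp.equiv_symm_apply, PiLp.toLp_apply, Fin.sum_univ_three, Matrix.cons_val_zero,
        Matrix.cons_val_one, Matrix.head_cons, Matrix.cons_val_two, Matrix.tail_cons,
        Real.norm_eq_abs, sq_abs]
      have hv : Real.sin (2*π*v) ^ 2 + Real.cos (2*π*v) ^ 2 = 1 := Real.sin_sq_add_cos_sq _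
      have hu : Real.sin (2*π*u) ^ 2 + Real.cos (2*π*u) ^ 2 = 1 := Real.sin_sq_add_cos_sq _
      have hco : Real.cos (2*π*(v-u)) = Real.cos (2*π*v) * Real.cos (2*π*u)
          + Real.sin (2*π*v) * Real.sin (2*π*u) := by
        rw [show 2*π*(v-u) = 2*π*v - 2*π*u by ring, Real.cos_sub]
      rw [hco]
      linear_combination ri^2 * hu + rj^2 * hv - hρ2 + (Real.cos (2*π*v) * Real.cos (2*π*u)
          + Real.sin (2*π*v) * Real.sin (2*π*u)) * hδρ
    rw [hA, Real.sqrt_mul (sq_nonneg ρ), Real.sqrt_sq hρpos.le]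
    rw [mul_pow]
    congr 1
    rw [show Real.sqrt (1 - δ * Real.cos (2*π*(v-u)))
        = (1 - δ * Real.cos (2*π*(v-u))) ^ ((1:ℝ)/2) from Real.sqrt_eq_rpow _]
    rw [← Real.rpow_natCast ((1 - δ * Real.cos (2*π*(v-u))) ^ ((1:ℝ)/2)) 3,
      ← Real.rpow_mul hXpos.le]
    norm_num
  -- cross product computation
  have hcross : ∀ v : ℝ, cross3 (Xi u - Xj v) (Tj v)
      = (WithLp.equiv 2 (Fin 3 → ℝ)).symm
          ![-(z * Real.cos (2*π*v)), -(z * Real.sin (2*π*v)),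
            ri * Real.cos (2*π*(v-u)) - rj] := by
    intro v
    rw [hsub v, hTj v]
    unfold cross3
    ext i
    have hv : Real.sin (2*π*v) ^ 2 + Real.cos (2*π*v) ^ 2 = 1 := Real.sin_sq_add_cos_sq _
    have hco : Real.cos (2*π*(v-u)) = Real.cos (2*π*v) * Real.cos (2*π*u)
        + Real.sin (2*π*v) * Real.sin (2*π*u) := by
      rw [show 2*π*(v-u) = 2*π*v - 2*π*u by ring, Real.cos_sub]
    fin_cases i
    · simp [WithLp.equiv_symm_apply, PiLp.toLp_apply]
    · simp [WithLp.equiv_symm_apply, PiLp.toLp_apply]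
    · simp [WithLp.equiv_symm_apply, PiLp.toLp_apply]
      linear_combination (-ri) * hco + (-rj) * hv
  -- the three scalar component functions
  set D : ℝ → ℝ := fun v => (1 - δ * Real.cos (2*π*(v-u))) ^ ((3:ℝ)/2) with hD
  have hDpos : ∀ v, 0 < D v := fun v =>
    Real.rpow_pos_of_pos (cosden_pos hδpos.le hδlt _) _
  have hcontD : Continuous D := by
    apply Continuous.rpow_const
    · exact continuous_const.sub (continuous_const.mul (Real.continuous_cos.comp
        (continuous_const.mul (continuous_id.sub continuous_const))))
    intro x; exact Or.inl (ne_of_gt (cosden_pos hδpos.le hδlt _))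
  set f0 : ℝ → ℝ := fun v => (-z/ρ^3) * (Real.cos (2*π*v) / D v) with hf0
  set f1 : ℝ → ℝ := fun v => (-z/ρ^3) * (Real.sin (2*π*v) / D v) with hf1
  set f2 : ℝ → ℝ := fun v => (ρ^3)⁻¹ * ((ri * Real.cos (2*π*(v-u)) - rj) / D v) with hf2
  have hρ3 : (ρ:ℝ)^3 ≠ 0 := by positivity
  -- key pointwise identity
  have key : ∀ v : ℝ, (‖Xi u - Xj v‖ ^ 3)⁻¹ • cross3 (Xi u - Xj v) (Tj v)
      = ((WithLp.equiv 2 (Fin 3 → ℝ)).symm ![f0 v, f1 v, f2 v] : EuclideanSpace ℝ (Fin 3)) := by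
    intro v
    rw [hnorm3 v, hcross v]
    ext i
    have hDv : ((1 - δ * Real.cos (2*π*(v-u))) ^ ((3:ℝ)/2)) ≠ 0 := (hDpos v).ne'
    have hρne : ρ ≠ 0 := hρpos.ne'
    fin_cases i <;>
      simp only [PiLp.smul_apply, WithLp.equiv_symm_apply, PiLp.toLp_apply, Matrix.cons_val_zero,
        Matrix.cons_val_one, Matrix.head_cons, Matrix.cons_val_two, Matrix.tail_cons,
        smul_eq_mul, hf0, hf1, hf2, hD, Fin.mk_zero, Fin.mk_one, Fin.reduceFinMk] <;>
      field_simp <;> ring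
  -- integrability
  have hc1 : Continuous fun v : ℝ => 2*π*v := continuous_const.mul continuous_id
  have hc2 : Continuous fun v : ℝ => 2*π*(v-u) :=
    continuous_const.mul (continuous_id.sub continuous_const)
  have hint0 : IntervalIntegrable f0 volume 0 1 := by
    apply Continuous.intervalIntegrable
    exact continuous_const.mul ((Real.continuous_cos.comp hc1).div
      hcontD fun x => ne_of_gt (hDpos x))
  have hint1 : IntervalIntegrable f1 volume 0 1 := by
    apply Continuous.intervalIntegrable
    exact continuous_const.mul ((Real.continuous_sin.comp hc1).div
      hcontD fun x => ne_of_gt (hDpos x))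
  have hint2 : IntervalIntegrable f2 volume 0 1 := by
    apply Continuous.intervalIntegrable
    exact continuous_const.mul
      (((continuous_const.mul (Real.continuous_cos.comp hc2)).sub continuous_const).div
        hcontD fun x => ne_of_gt (hDpos x))
  -- rewrite the integral
  have hIeq : (∫ v in (0:ℝ)..1, (‖Xi u - Xj v‖ ^ 3)⁻¹ • cross3 (Xi u - Xj v) (Tj v))
      = (WithLp.equiv 2 (Fin 3 → ℝ)).symm
          ![∫ v in (0:ℝ)..1, f0 v, ∫ v in (0:ℝ)..1, f1 v, ∫ v in (0:ℝ)..1, f2 v] := by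
    rw [intervalIntegral.integral_congr (g := fun v =>
        ((WithLp.equiv 2 (Fin 3 → ℝ)).symm ![f0 v, f1 v, f2 v] : EuclideanSpace ℝ (Fin 3)))
        (fun v _ => key v)]
    exact integral_vec3 f0 f1 f2 hint0 hint1 hint2
  -- evaluate the scalar integrals
  have hI0 : (∫ v in (0:ℝ)..1, f0 v) = (-z/ρ^3) * (cu * Is δ) := by
    simp only [hf0, hD]
    rw [intervalIntegral.integral_const_mul, Kcos hδpos.le hδlt u, hcu]
  have hI1 : (∫ v in (0:ℝ)..1, f1 v) = (-z/ρ^3) * (su * Is δ) := by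
    simp only [hf1, hD]
    rw [intervalIntegral.integral_const_mul, Ksin hδpos.le hδlt u, hsu]
  have hI2 : (∫ v in (0:ℝ)..1, f2 v) = (ρ^3)⁻¹ * (ri * Is δ - rj * I0 δ) := by
    simp only [hf2, hD]
    rw [intervalIntegral.integral_const_mul, Kthird hδpos.le hδlt ri rj u]
  rw [hIeq, hI0, hI1, hI2]
  ext i
  fin_cases i <;>
    simp only [PiLp.smul_apply, WithLp.equiv_symm_apply, PiLp.toLp_apply, Matrix.cons_val_zero,
      Matrix.cons_val_one, Matrix.head_cons, Matrix.cons_val_two, Matrix.tail_cons,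
      smul_eq_mul, Fin.reduceFinMk] <;>
    field_simp <;> ring
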